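/- Let A = k[t] be the polynomial ring in one variable over a field k, graded with deg(t) = 1. Every finitely generated graded torsion A-module is isomorphic to a finite direct sum of graded modules of the form A(-p)/(t^q) with p ∈ ℤ and q ≥ 1. -/

import Mathlib

open Polynomial
set_option linter.unusedSectionVars false
namespace GradedTorsionAux

variable {k : Type*} [Field k]
variable {M : Type*} [AddCommGroup M] [Module (Polynomial k) M] [Module k M]
  [IsScalarTower k (Polynomial k) M]
variable (ℳ : ℤ → Submodule k M)

theorem smul_expand (f : Polynomial k) (m : M) :
    f • m = ∑ j ∈ Finset.range (f.natDegree + 1), f.coeff j • ((X : Polynomial k) ^ j • m) := by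
  conv_lhs => rw [Polynomial.as_sum_range f]
  rw [Finset.sum_smul]
  refine Finset.sum_congr rfl fun j _ => ?_
  rw [← C_mul_X_pow_eq_monomial, mul_smul, ← Polynomial.algebraMap_eq, algebraMap_smul]

theorem pow_smul_mem (hcompat : ∀ i : ℤ, ∀ m ∈ ℳ i, (X : Polynomial k) • m ∈ ℳ (i + 1))
    {i : ℤ} {m : M} (hm : m ∈ ℳ i) (j : ℕ) : (X : Polynomial k) ^ j • m ∈ ℳ (i + j) := by
  induction j with
  | zero => simpa using hm
  | succ n ih =>
      have h := hcompat _ _ ih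
      rw [pow_succ, mul_comm, mul_smul]
      convert h using 2
      push_cast; ring

noncomputable def pr (hi : DirectSum.IsInternal ℳ) (i : ℤ) : M →ₗ[k] M :=
  (ℳ i).subtype ∘ₗ (DirectSum.component k ℤ (fun j => ℳ j) i) ∘ₗ
    (LinearEquiv.ofBijective (DirectSum.coeLinearMap ℳ) hi).symm.toLinearMap

variable (hi : DirectSum.IsInternal ℳ)
  (hcompat : ∀ i : ℤ, ∀ m ∈ ℳ i, (X : Polynomial k) • m ∈ ℳ (i + 1))

theorem pr_apply (i : ℤ) (m : M) :
    pr ℳ hi i m = (((LinearEquiv.ofBijective (DirectSum.coeLinearMap ℳ) hi).symm m) i : M) :=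
  rfl

theorem pr_mem (i : ℤ) (m : M) : pr ℳ hi i m ∈ ℳ i := by
  rw [pr_apply]; exact Subtype.coe_prop _

theorem pr_of_mem {i : ℤ} {m : M} (hm : m ∈ ℳ i) : pr ℳ hi i m = m := by
  rw [pr_apply, hi.ofBijective_coeLinearMap_of_mem hm]

theorem pr_of_mem_ne {i j : ℤ} {m : M} (hm : m ∈ ℳ j) (hij : j ≠ i) : pr ℳ hi i m = 0 := by
  rw [pr_apply, hi.ofBijective_coeLinearMap_of_mem_ne hij hm]; rfl

theorem pr_sum (m : M) : ∃ I : Finset ℤ, m = ∑ i ∈ I, pr ℳ hi i m := by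
  classical
  set e := LinearEquiv.ofBijective (DirectSum.coeLinearMap ℳ) hi with he
  refine ⟨(e.symm m).support, ?_⟩
  have h1 : m = e (e.symm m) := (e.apply_symm_apply m).symm
  have h2 : e (e.symm m) = ∑ i ∈ (e.symm m).support, ((e.symm m) i : M) := by
    show DirectSum.coeLinearMap ℳ (e.symm m) = _
    rw [DirectSum.coeLinearMap_eq_dfinsuppSum]
    rfl
  simpa only [pr_apply] using h1.trans h2

include hcompat in
/-- the key computation: the graded components of `f • y` for homogeneous `y`. -/
theorem pr_poly_smul {p0 : ℤ} {y : M} (hy : y ∈ ℳ p0) (f : Polynomial k) (i : ℤ) :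
    pr ℳ hi i (f • y) =
      if p0 ≤ i then f.coeff (i - p0).toNat • ((X : Polynomial k) ^ (i - p0).toNat • y)
      else 0 := by
  classical
  rw [smul_expand, map_sum]
  have hterm : ∀ j : ℕ, pr ℳ hi i ((f.coeff j) • ((X : Polynomial k) ^ j • y)) =
      if j = (i - p0).toNat ∧ p0 ≤ i then f.coeff j • ((X : Polynomial k) ^ j • y) else 0 := by
    intro j
    rw [map_smul]
    by_cases hj : (p0 + j : ℤ) = i
    · have h1 : p0 ≤ i := by omega
      have h2 : j = (i - p0).toNat := by omega
      rw [if_pos ⟨h2, h1⟩, pr_of_mem ℳ hi (hj ▸ pow_smul_mem ℳ hcompat hy j)]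
    · rw [if_neg, pr_of_mem_ne ℳ hi (pow_smul_mem ℳ hcompat hy j) hj, smul_zero]
      rintro ⟨h2, h1⟩
      omega
  rw [Finset.sum_congr rfl fun j _ => hterm j]
  by_cases hip : p0 ≤ i
  · simp only [hip, and_true, if_true]
    rw [Finset.sum_ite_eq' (Finset.range (f.natDegree + 1)) ((i - p0).toNat)
      (fun j => f.coeff j • ((X : Polynomial k) ^ j • y))]
    by_cases hmem : (i - p0).toNat ∈ Finset.range (f.natDegree + 1)
    · rw [if_pos hmem]
    · rw [if_neg hmem]
      have : f.coeff (i - p0).toNat = 0 := by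
        apply Polynomial.coeff_eq_zero_of_natDegree_lt
        simp only [Finset.mem_range, not_lt] at hmem
        omega
      rw [this, zero_smul]
  · rw [if_neg hip]
    apply Finset.sum_eq_zero
    intro j _
    rw [if_neg]
    rintro ⟨-, h⟩
    exact hip h

include hi hcompat in
/-- annihilator of a homogeneous element of "order" `q`. -/
theorem ann_eq {p0 : ℤ} {y : M} (hy : y ∈ ℳ p0) {q : ℕ}
    (hy0 : (X : Polynomial k) ^ q • y = 0) (hy1 : (X : Polynomial k) ^ (q - 1) • y ≠ 0)
    (f : Polynomial k) : f • y = 0 ↔ f ∈ Ideal.span {(X : Polynomial k) ^ q} := by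
  have hpow : ∀ d < q, (X : Polynomial k) ^ d • y ≠ 0 := by
    intro d hd h0
    apply hy1
    have : (X : Polynomial k) ^ (q - 1) = X ^ (q - 1 - d) * X ^ d := by
      rw [← pow_add]; congr 1; omega
    rw [this, mul_smul, h0, smul_zero]
  constructor
  · intro hf
    rw [Ideal.mem_span_singleton]
    rw [Polynomial.X_pow_dvd_iff]
    intro d hd
    have := pr_poly_smul ℳ hi hcompat hy f (p0 + d)
    rw [hf, map_zero] at this
    have h1 : p0 ≤ p0 + (d : ℤ) := by omega
    rw [eq_comm, if_pos h1] at this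
    have h2 : ((p0 + d : ℤ) - p0).toNat = d := by omega
    rw [h2] at this
    rcases smul_eq_zero.mp this with h | h
    · exact h
    · exact absurd h (hpow d hd)
  · intro hf
    rw [Ideal.mem_span_singleton] at hf
    obtain ⟨g, rfl⟩ := hf
    rw [mul_comm, mul_smul, hy0, smul_zero]

theorem exists_bound (hfg : Module.Finite (Polynomial k) M)
    (htors : ∀ m : M, ∃ N : ℕ, (X : Polynomial k) ^ N • m = 0) :
    ∃ B : ℕ, ∀ m : M, (X : Polynomial k) ^ B • m = 0 := by
  obtain ⟨S, hS⟩ := hfg.fg_top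
  choose Nf hNf using htors
  refine ⟨S.sup Nf, fun m => ?_⟩
  have hm : m ∈ Submodule.span (Polynomial k) (S : Set M) := by rw [hS]; trivial
  have hker : Submodule.span (Polynomial k) (S : Set M) ≤
      LinearMap.ker (LinearMap.lsmul (Polynomial k) M ((X : Polynomial k) ^ S.sup Nf)) := by
    rw [Submodule.span_le]
    intro s hs
    simp only [SetLike.mem_coe, LinearMap.mem_ker, LinearMap.lsmul_apply]
    have hle : Nf s ≤ S.sup Nf := Finset.le_sup (Finset.mem_coe.mp hs)
    have h1 : (X : Polynomial k) ^ S.sup Nf = X ^ (S.sup Nf - Nf s) * X ^ Nf s := by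
      rw [← pow_add]; congr 1; omega
    rw [h1, mul_smul, hNf s, smul_zero]
  simpa using hker hm

theorem finite_k (hfg : Module.Finite (Polynomial k) M)
    (htors : ∀ m : M, ∃ N : ℕ, (X : Polynomial k) ^ N • m = 0) :
    Module.Finite k M := by
  obtain ⟨B, hB⟩ := exists_bound hfg htors
  obtain ⟨S, hS⟩ := hfg.fg_top
  classical
  set T : Finset M := (S ×ˢ Finset.range (B + 1)).image
    (fun pr => (X : Polynomial k) ^ pr.2 • pr.1) with hT
  set W : Submodule k M := Submodule.span k (T : Set M) with hW
  have hXW : ∀ w ∈ W, (X : Polynomial k) • w ∈ W := by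
    intro w hw
    induction hw using Submodule.span_induction with
    | mem t ht =>
        obtain ⟨⟨s, j⟩, hmem, rfl⟩ := Finset.mem_image.mp ht
        simp only [Finset.mem_product, Finset.mem_range] at hmem
        have he : (X : Polynomial k) • (X : Polynomial k) ^ j • s = (X : Polynomial k) ^ (j + 1) • s := by
          rw [← mul_smul, ← pow_succ']
        rw [he]
        by_cases hj : j + 1 < B + 1
        · exact Submodule.subset_span (Finset.mem_image.mpr
            ⟨(s, j + 1), Finset.mem_product.mpr ⟨hmem.1, Finset.mem_range.mpr hj⟩, rfl⟩)
        · have h1 : (X : Polynomial k) ^ (j + 1) = X ^ (j + 1 - B) * X ^ B := by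
            rw [← pow_add]; congr 1; omega
          rw [h1, mul_smul, hB, smul_zero]
          exact zero_mem W
    | zero => rw [smul_zero]; exact zero_mem W
    | add x y _ _ hx hy => rw [smul_add]; exact add_mem hx hy
    | smul a x _ hx => rw [smul_comm]; exact Submodule.smul_mem _ _ hx
  have hXW' : ∀ (j : ℕ), ∀ w ∈ W, (X : Polynomial k) ^ j • w ∈ W := by
    intro j
    induction j with
    | zero => intro w hw; simpa using hw
    | succ n ih =>
        intro w hw
        rw [pow_succ, mul_smul]
        exact ih _ (hXW w hw)
  have hfW : ∀ (f : Polynomial k), ∀ w ∈ W, f • w ∈ W := by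
    intro f w hw
    rw [smul_expand]
    exact Submodule.sum_mem _ fun j _ => Submodule.smul_mem _ _ (hXW' j w hw)
  refine ⟨⟨T, ?_⟩⟩
  suffices h : ∀ m : M, m ∈ W by
    rw [eq_top_iff]; intro m _; exact h m
  intro m
  have hm : m ∈ Submodule.span (Polynomial k) (S : Set M) := by rw [hS]; trivial
  induction hm using Submodule.span_induction with
  | mem s hs =>
      refine Submodule.subset_span (Finset.mem_image.mpr
        ⟨(s, 0), Finset.mem_product.mpr ⟨Finset.mem_coe.mp hs, Finset.mem_range.mpr ?_⟩, ?_⟩)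
      · omega
      · simp
  | zero => exact zero_mem W
  | add x y _ _ hx hy => exact add_mem hx hy
  | smul f x _ hx => exact hfW f x hx



theorem iSup_fin_cons {α} [CompleteLattice α] {s : ℕ} (A : α) (f : Fin s → α) :
    (⨆ t : Fin (s + 1), Fin.cons A f t) = A ⊔ ⨆ t, f t := by
  apply le_antisymm
  · apply iSup_le
    intro t
    refine Fin.cases ?_ ?_ t
    · simp
    · intro j
      simpa using le_trans (le_iSup f j) le_sup_right
  · apply sup_le
    · exact le_iSup_of_le 0 (by simp)
    · exact iSup_le fun j => le_iSup_of_le j.succ (by simp)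

theorem indep_fin_cons {α} [CompleteLattice α] [IsModularLattice α] {s : ℕ} {A Cs : α}
    {f : Fin s → α} (hf : iSupIndep f) (hC : (⨆ t, f t) = Cs) (hd : Disjoint A Cs) :
    iSupIndep (Fin.cons A f : Fin (s + 1) → α) := by
  rw [iSupIndep_def]
  intro t
  refine Fin.cases ?_ ?_ t
  · simp only [Fin.cons_zero]
    refine hd.mono_right ?_
    apply iSup_le
    intro j
    apply iSup_le
    intro hj
    refine Fin.cases ?_ ?_ j hj
    · intro h; exact absurd rfl h
    · intro j' _
      simp only [Fin.cons_succ]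
      exact hC ▸ le_iSup f j'
  · intro t'
    simp only [Fin.cons_succ]
    set K := ⨆ j, ⨆ (_ : j ≠ t'), f j with hK
    have hsub : (⨆ j, ⨆ (_ : j ≠ t'.succ), (Fin.cons A f : Fin (s+1) → α) j) ≤ A ⊔ K := by
      apply iSup_le
      intro j
      apply iSup_le
      intro hj
      refine Fin.cases ?_ ?_ j hj
      · intro _; simp only [Fin.cons_zero]; exact le_sup_left
      · intro j' hj'
        simp only [Fin.cons_succ]
        have hne : j' ≠ t' := fun h => hj' (by rw [h])
        exact le_trans (le_iSup_of_le j' (le_iSup_of_le hne (le_refl (f j')))) le_sup_right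
    refine Disjoint.mono_right hsub ?_
    have hKC : K ≤ Cs := hC ▸ iSup_le fun j => iSup_le fun _ => le_iSup f j
    have hft : f t' ≤ Cs := hC ▸ le_iSup f t'
    rw [disjoint_iff_inf_le]
    have h1 : f t' ⊓ (A ⊔ K) ≤ K := by
      calc f t' ⊓ (A ⊔ K) ≤ Cs ⊓ (K ⊔ A) := inf_le_inf hft (by rw [sup_comm])
        _ = (K ⊔ A) ⊓ Cs := inf_comm _ _
        _ = K ⊔ A ⊓ Cs := sup_inf_assoc_of_le A hKC
        _ = K ⊔ ⊥ := by rw [disjoint_iff.mp hd]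
        _ = K := sup_bot_eq K
    have h2 : f t' ⊓ (A ⊔ K) ≤ f t' ⊓ K := le_inf inf_le_left h1
    exact le_trans h2 (disjoint_iff_inf_le.mp (iSupIndep_def.mp hf t'))

/-- a `k[X]`-submodule is graded if it contains the graded components of all its elements. -/
def IsGraded (hi : DirectSum.IsInternal ℳ) (N : Submodule (Polynomial k) M) : Prop :=
  ∀ m ∈ N, ∀ i, pr ℳ hi i m ∈ N

/-- the conclusion of the structure theorem, for the submodule `N`. -/
def Conc (N : Submodule (Polynomial k) M) : Prop :=
  ∃ (s : ℕ) (p : Fin s → ℤ) (q : Fin s → ℕ) (y : Fin s → M),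
    (∀ t, 1 ≤ q t) ∧ (∀ t, y t ∈ ℳ (p t)) ∧
    (∀ t, ∀ f : Polynomial k, f • y t = 0 ↔ f ∈ Ideal.span {(X : Polynomial k) ^ q t}) ∧
    iSupIndep (fun t => Submodule.span (Polynomial k) {y t}) ∧
    (⨆ t, Submodule.span (Polynomial k) {y t}) = N

theorem isGraded_sup {N1 N2 : Submodule (Polynomial k) M} (h1 : IsGraded ℳ hi N1)
    (h2 : IsGraded ℳ hi N2) : IsGraded ℳ hi (N1 ⊔ N2) := by
  intro m hm i
  obtain ⟨a, ha, b, hb, rfl⟩ := Submodule.mem_sup.mp hm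
  rw [map_add]
  exact Submodule.add_mem_sup (h1 a ha i) (h2 b hb i)

include hcompat in
theorem isGraded_span_homog {p0 : ℤ} {y : M} (hy : y ∈ ℳ p0) :
    IsGraded ℳ hi (Submodule.span (Polynomial k) ({y} : Set M)) := by
  intro m hm i
  obtain ⟨f, rfl⟩ := Submodule.mem_span_singleton.mp hm
  rw [pr_poly_smul ℳ hi hcompat hy]
  split
  · exact Submodule.smul_of_tower_mem _ _
      (Submodule.smul_mem _ _ (Submodule.mem_span_singleton_self y))
  · exact Submodule.zero_mem _

include hcompat in
theorem main [IsArtinian (Polynomial k) M] [IsNoetherian (Polynomial k) M] (B : ℕ)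
    (hB : ∀ m : M, (X : Polynomial k) ^ B • m = 0) (N : Submodule (Polynomial k) M) :
    IsGraded ℳ hi N → Conc ℳ N := by
  induction N using WellFoundedLT.induction with
  | ind N IH =>
  intro hNgr
  classical
  by_cases hNbot : N = ⊥
  · subst hNbot
    refine ⟨0, Fin.elim0, Fin.elim0, Fin.elim0, fun t => t.elim0, fun t => t.elim0,
      fun t => t.elim0, ?_, ?_⟩
    · rw [iSupIndep_def]; exact fun t => t.elim0
    · exact le_antisymm (iSup_le fun t => t.elim0) bot_le
  -- `q` : the exact exponent killing `N`
  have hex : ∃ j : ℕ, ∀ m ∈ N, (X : Polynomial k) ^ j • m = 0 := ⟨B, fun m _ => hB m⟩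
  set q := Nat.find hex with hqdef
  have hq : ∀ m ∈ N, (X : Polynomial k) ^ q • m = 0 := Nat.find_spec hex
  have hq1 : 1 ≤ q := by
    rcases Nat.eq_zero_or_pos q with h0 | h
    · exfalso
      apply hNbot
      rw [eq_bot_iff]
      intro m hm
      have hz := hq m hm
      rw [h0, pow_zero, one_smul] at hz
      exact hz
    · exact h
  have hqm : ¬ ∀ m ∈ N, (X : Polynomial k) ^ (q - 1) • m = 0 :=
    Nat.find_min hex (by omega)
  push_neg at hqm
  obtain ⟨n0, hn0N, hn0⟩ := hqm
  -- a homogeneous element of maximal order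
  have hcomp : ∃ i : ℤ, (X : Polynomial k) ^ (q - 1) • pr ℳ hi i n0 ≠ 0 := by
    by_contra hall
    push_neg at hall
    apply hn0
    obtain ⟨I, hI⟩ := pr_sum ℳ hi n0
    conv_lhs => rw [hI]
    rw [Finset.smul_sum]
    exact Finset.sum_eq_zero fun i _ => hall i
  obtain ⟨p0, hp0⟩ := hcomp
  set y := pr ℳ hi p0 n0 with hydef
  have hy : y ∈ ℳ p0 := pr_mem ℳ hi p0 n0
  have hyN : y ∈ N := hNgr n0 hn0N p0
  have hy1 : (X : Polynomial k) ^ (q - 1) • y ≠ 0 := hp0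
  have hy0 : (X : Polynomial k) ^ q • y = 0 := hq y hyN
  set Y := Submodule.span (Polynomial k) ({y} : Set M) with hYdef
  have hYN : Y ≤ N := (Submodule.span_singleton_le_iff_mem y N).mpr hyN
  have hYgr : IsGraded ℳ hi Y := isGraded_span_homog ℳ hi hcompat hy
  -- a maximal graded submodule meeting `Y` trivially
  set S : Set (Submodule (Polynomial k) M) :=
    {C | C ≤ N ∧ IsGraded ℳ hi C ∧ Disjoint Y C} with hSdef
  have hSne : S.Nonempty := by
    refine ⟨⊥, bot_le, ?_, disjoint_bot_right⟩
    intro m hm i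
    rw [Submodule.mem_bot] at hm
    rw [hm, map_zero]
    exact Submodule.zero_mem ⊥
  obtain ⟨C, hCS, hCmax⟩ :=
    (set_has_maximal_iff_noetherian.mpr ‹IsNoetherian (Polynomial k) M›) S hSne
  obtain ⟨hCN, hCgr, hYC⟩ := hCS
  -- key claim : `Y ⊔ C = N`
  have hsupN : Y ⊔ C = N := by
    by_contra hne
    have hDN : Y ⊔ C ≤ N := sup_le hYN hCN
    set D := Y ⊔ C with hDdef
    have hDgr : IsGraded ℳ hi D := isGraded_sup ℳ hi hYgr hCgr
    -- a homogeneous element of `N` outside `D`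
    have hexn : ∃ n ∈ N, n ∉ D := by
      by_contra hall
      push_neg at hall
      exact hne (le_antisymm hDN hall)
    obtain ⟨n1, hn1N, hn1D⟩ := hexn
    have hexhom : ∃ (d0 : ℤ) (x0 : M), x0 ∈ ℳ d0 ∧ x0 ∈ N ∧ x0 ∉ D := by
      by_contra hall
      push_neg at hall
      apply hn1D
      obtain ⟨I1, hI1⟩ := pr_sum ℳ hi n1
      rw [hI1]
      exact Submodule.sum_mem D fun i _ =>
        hall i (pr ℳ hi i n1) (pr_mem ℳ hi i n1) (hNgr n1 hn1N i)
    obtain ⟨d0, x0, hx0deg, hx0N, hx0D⟩ := hexhom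
    -- descend to `x ∉ D` with `X • x ∈ D`
    have hPex : ∃ j : ℕ, (X : Polynomial k) ^ j • x0 ∈ D := by
      refine ⟨q, ?_⟩
      rw [hq x0 hx0N]
      exact Submodule.zero_mem D
    set j0 := Nat.find hPex with hj0def
    have hj0 : (X : Polynomial k) ^ j0 • x0 ∈ D := Nat.find_spec hPex
    have hj01 : 1 ≤ j0 := by
      rcases Nat.eq_zero_or_pos j0 with h0 | h
      · exfalso
        apply hx0D
        have hz := hj0
        rw [h0, pow_zero, one_smul] at hz
        exact hz
      · exact h
    set x := (X : Polynomial k) ^ (j0 - 1) • x0 with hxdef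
    have hxD : x ∉ D := Nat.find_min hPex (by omega)
    have hxX : (X : Polynomial k) • x ∈ D := by
      have h5 : (X : Polynomial k) • x = (X : Polynomial k) ^ (j0 - 1 + 1) • x0 := by
        rw [hxdef, ← mul_smul, ← pow_succ']
      have h6 : j0 - 1 + 1 = j0 := by omega
      rw [h5, h6]
      exact hj0
    set d := d0 + ((j0 - 1 : ℕ) : ℤ) with hddef
    have hxdeg : x ∈ ℳ d := pow_smul_mem ℳ hcompat hx0deg (j0 - 1)
    have hxN : x ∈ N := Submodule.smul_mem N _ hx0N
    -- decompose `X • x` into homogeneous parts from `Y` and `C`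
    obtain ⟨u, huY, c, hcC, hsum⟩ := Submodule.mem_sup.mp hxX
    have hXx : (X : Polynomial k) • x ∈ ℳ (d + 1) := hcompat d x hxdeg
    have hprXx : pr ℳ hi (d + 1) ((X : Polynomial k) • x) = (X : Polynomial k) • x :=
      pr_of_mem ℳ hi hXx
    set u' := pr ℳ hi (d + 1) u with hu'def
    set c' := pr ℳ hi (d + 1) c with hc'def
    have hu'Y : u' ∈ Y := hYgr u huY (d + 1)
    have hc'C : c' ∈ C := hCgr c hcC (d + 1)
    have hsum' : (X : Polynomial k) • x = u' + c' := by
      calc (X : Polynomial k) • x = pr ℳ hi (d + 1) ((X : Polynomial k) • x) := hprXx.symm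
        _ = pr ℳ hi (d + 1) (u + c) := by rw [hsum]
        _ = u' + c' := map_add _ u c
    -- `X ^ (q-1) • u' = 0`
    have hu'0 : (X : Polynomial k) ^ (q - 1) • u' = 0 := by
      have h0 : (X : Polynomial k) ^ (q - 1) • u' + (X : Polynomial k) ^ (q - 1) • c' = 0 := by
        rw [← smul_add, ← hsum', ← mul_smul, ← pow_succ]
        have hq1' : q - 1 + 1 = q := by omega
        rw [hq1']
        exact hq x hxN
      have h1 : (X : Polynomial k) ^ (q - 1) • u' ∈ Y := Submodule.smul_mem Y _ hu'Y
      have h2 : (X : Polynomial k) ^ (q - 1) • u' ∈ C := by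
        have hneg : (X : Polynomial k) ^ (q - 1) • u' = -((X : Polynomial k) ^ (q - 1) • c') := by
          rw [eq_neg_iff_add_eq_zero]
          exact h0
        rw [hneg]
        exact Submodule.neg_mem C (Submodule.smul_mem C _ hc'C)
      exact Submodule.disjoint_def.mp hYC _ h1 h2
    -- produce `v ∈ Y ∩ ℳ d` with `X • v = u'`
    have hv : ∃ v : M, v ∈ Y ∧ v ∈ ℳ d ∧ (X : Polynomial k) • v = u' := by
      obtain ⟨f, hf⟩ := Submodule.mem_span_singleton.mp huY
      have hcompu := pr_poly_smul ℳ hi hcompat hy f (d + 1)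
      rw [hf] at hcompu
      by_cases hpd : p0 ≤ d + 1
      · rw [if_pos hpd] at hcompu
        set mm := (d + 1 - p0).toNat with hmm
        by_cases ha : f.coeff mm = 0
        · refine ⟨0, Submodule.zero_mem Y, Submodule.zero_mem (ℳ d), ?_⟩
          rw [smul_zero, hu'def, hcompu, ha, zero_smul]
        · have hmmz : (mm : ℤ) = d + 1 - p0 := by
            rw [hmm]
            exact Int.toNat_of_nonneg (by omega)
          have h4 : f.coeff mm • ((X : Polynomial k) ^ (q - 1 + mm) • y) = 0 := by
            have h3 : (X : Polynomial k) ^ (q - 1) • u'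
                = f.coeff mm • ((X : Polynomial k) ^ (q - 1 + mm) • y) := by
              rw [hu'def, hcompu, smul_comm, ← mul_smul, ← pow_add]
            rw [← h3]
            exact hu'0
          have hXmy0 : (X : Polynomial k) ^ (q - 1 + mm) • y = 0 := by
            rcases smul_eq_zero.mp h4 with h | h
            · exact absurd h ha
            · exact h
          have hmm1 : 1 ≤ mm := by
            by_contra hmm0
            push_neg at hmm0
            have hz : mm = 0 := by omega
            rw [hz, add_zero] at hXmy0
            exact hy1 hXmy0
          refine ⟨f.coeff mm • ((X : Polynomial k) ^ (mm - 1) • y), ?_, ?_, ?_⟩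
          · exact Submodule.smul_of_tower_mem _ _
              (Submodule.smul_mem _ _ (Submodule.mem_span_singleton_self y))
          · have hmem := pow_smul_mem ℳ hcompat hy (mm - 1)
            have hmemk := Submodule.smul_mem _ (f.coeff mm) hmem
            have hdd : p0 + ((mm - 1 : ℕ) : ℤ) = d := by omega
            rwa [hdd] at hmemk
          · rw [smul_comm, ← mul_smul, ← pow_succ']
            have h7 : mm - 1 + 1 = mm := by omega
            rw [h7, hu'def, hcompu]
      · rw [if_neg hpd] at hcompu
        refine ⟨0, Submodule.zero_mem Y, Submodule.zero_mem (ℳ d), ?_⟩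
        rw [smul_zero, hu'def, hcompu]
    obtain ⟨v, hvY, hvdeg, hvX⟩ := hv
    set x' := x - v with hx'def
    have hx'D : x' ∉ D := by
      intro hmemx'
      apply hxD
      have hxe : x = x' + v := by rw [hx'def]; abel
      rw [hxe]
      exact Submodule.add_mem D hmemx' (Submodule.mem_sup_left hvY)
    have hx'X : (X : Polynomial k) • x' = c' := by
      rw [hx'def, smul_sub, hvX, hsum']
      abel
    have hx'deg : x' ∈ ℳ d := Submodule.sub_mem _ hxdeg hvdeg
    have hx'N : x' ∈ N := Submodule.sub_mem N hxN (hYN hvY)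
    set C' := C ⊔ Submodule.span (Polynomial k) ({x'} : Set M) with hC'def
    have hx'C' : x' ∈ C' := Submodule.mem_sup_right (Submodule.mem_span_singleton_self x')
    have hC'S : C' ∈ S := by
      refine ⟨sup_le hCN ((Submodule.span_singleton_le_iff_mem x' N).mpr hx'N),
        isGraded_sup ℳ hi hCgr (isGraded_span_homog ℳ hi hcompat hx'deg), ?_⟩
      rw [Submodule.disjoint_def]
      intro w hwY hwC'
      obtain ⟨c1, hc1C, w2, hw2, hw⟩ := Submodule.mem_sup.mp hwC'
      obtain ⟨h, hh⟩ := Submodule.mem_span_singleton.mp hw2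
      have hsplit : h • x' = h.divX • c' + (Polynomial.C (h.coeff 0)) • x' := by
        conv_lhs => rw [← Polynomial.divX_mul_X_add h]
        rw [add_smul, mul_smul, hx'X]
      by_cases h0 : h.coeff 0 = 0
      · have hwC : w ∈ C := by
          have hwe : w = c1 + h.divX • c' := by
            rw [← hw, ← hh, hsplit, h0, Polynomial.C_0, zero_smul, add_zero]
          rw [hwe]
          exact Submodule.add_mem C hc1C (Submodule.smul_mem C _ hc'C)
        exact Submodule.disjoint_def.mp hYC w hwY hwC
      · exfalso
        apply hx'D
        have hmemD : (Polynomial.C (h.coeff 0)) • x' ∈ D := by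
          have he2 : (Polynomial.C (h.coeff 0)) • x' = w - c1 - h.divX • c' := by
            rw [← hw, ← hh, hsplit]
            abel
          rw [he2]
          exact Submodule.sub_mem D
            (Submodule.sub_mem D (Submodule.mem_sup_left hwY) (Submodule.mem_sup_right hc1C))
            (Submodule.mem_sup_right (Submodule.smul_mem C _ hc'C))
        have he3 : x' = (Polynomial.C (h.coeff 0)⁻¹) • ((Polynomial.C (h.coeff 0)) • x') := by
          rw [← mul_smul, ← Polynomial.C_mul, inv_mul_cancel₀ h0, Polynomial.C_1, one_smul]
        rw [he3]
        exact Submodule.smul_mem D _ hmemD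
    refine hCmax C' hC'S (lt_of_le_of_ne le_sup_left fun hEq => ?_)
    exact hx'D (Submodule.mem_sup_right (hEq ▸ hx'C'))
  -- apply the inductive hypothesis to `C`
  have hCltN : C < N := by
    refine lt_of_le_of_ne hCN fun hEq => ?_
    have hyC : y ∈ C := hEq ▸ hyN
    have hy0' : y = 0 :=
      Submodule.disjoint_def.mp hYC y (Submodule.mem_span_singleton_self y) hyC
    apply hy1
    rw [hy0', smul_zero]
  obtain ⟨s, p, qf, yf, hq1f, hyfdeg, hann, hindep, hsup⟩ := IH C hCltN hCgr
  have hfam : (fun t : Fin (s + 1) =>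
      Submodule.span (Polynomial k) {(Fin.cons y yf : Fin (s + 1) → M) t}) =
      (Fin.cons Y (fun t => Submodule.span (Polynomial k) {yf t}) :
        Fin (s + 1) → Submodule (Polynomial k) M) := by
    funext t
    refine Fin.cases ?_ ?_ t
    · simp [hYdef]
    · intro t'
      simp
  refine ⟨s + 1, Fin.cons p0 p, Fin.cons q qf, (Fin.cons y yf : Fin (s + 1) → M),
    ?_, ?_, ?_, ?_, ?_⟩
  · intro t
    refine Fin.cases ?_ ?_ t
    · simpa using hq1
    · intro t'; simpa using hq1f t'
  · intro t
    refine Fin.cases ?_ ?_ t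
    · simpa using hy
    · intro t'; simpa using hyfdeg t'
  · intro t
    refine Fin.cases ?_ ?_ t
    · intro f
      simpa using ann_eq ℳ hi hcompat hy hy0 hy1 f
    · intro t' f
      simpa using hann t' f
  · rw [hfam]
    exact indep_fin_cons hindep hsup hYC
  · rw [hfam, iSup_fin_cons, hsup]
    exact hsupN

end GradedTorsionAux



/-- **Structure of graded torsion modules over `A = k[t]`.** Let `k` be a field and
`A = k[t]` with `deg t = 1`. Every finitely generated graded torsion `A`-module `M`
(with grading `ℳ : ℤ → Submodule k M` compatible with multiplication by `t`) is an
internal direct sum of cyclic submodules generated by homogeneous elements `y t` of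
degree `p t` whose annihilator is `(t ^ q t)` with `q t ≥ 1`; that is, `M` is
isomorphic as a graded module to a finite direct sum `⊕ A(-p)/(t^q)`. -/
theorem graded_torsion_module_decomposition (k : Type*) [Field k]
    (M : Type*) [AddCommGroup M] [Module (Polynomial k) M] [Module k M]
    [IsScalarTower k (Polynomial k) M]
    (ℳ : ℤ → Submodule k M) (hinternal : DirectSum.IsInternal ℳ)
    (hcompat : ∀ i : ℤ, ∀ m ∈ ℳ i, (Polynomial.X : Polynomial k) • m ∈ ℳ (i + 1))
    (hfg : Module.Finite (Polynomial k) M)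
    (htors : ∀ m : M, ∃ N : ℕ, (Polynomial.X : Polynomial k) ^ N • m = 0) :
    ∃ (s : ℕ) (p : Fin s → ℤ) (q : Fin s → ℕ) (y : Fin s → M),
      (∀ t, 1 ≤ q t) ∧
      (∀ t, y t ∈ ℳ (p t)) ∧
      (∀ t, ∀ f : Polynomial k, f • y t = 0 ↔ f ∈ Ideal.span {Polynomial.X ^ q t}) ∧
      iSupIndep (fun t => Submodule.span (Polynomial k) {y t}) ∧
      (⨆ t, Submodule.span (Polynomial k) {y t}) = ⊤ := by
  classical
  haveI hfinkM : Module.Finite k M := GradedTorsionAux.finite_k hfg htors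
  haveI hart : IsArtinian (Polynomial k) M := isArtinian_of_tower k inferInstance
  haveI hnoe : IsNoetherian (Polynomial k) M := isNoetherian_of_tower k inferInstance
  obtain ⟨B, hB⟩ := GradedTorsionAux.exists_bound hfg htors
  obtain ⟨s, p, q, y, h1, h2, h3, h4, h5⟩ :=
    GradedTorsionAux.main ℳ hinternal hcompat B hB ⊤ (fun m _ i => Submodule.mem_top)
  exact ⟨s, p, q, y, h1, h2, h3, h4, h5⟩
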